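/- Max-distance sketch-and-project converges linearly: if at each step the sketch maximizing the sketched loss is selected and x⁰ ∈ range(B^{-1}Aᵀ), then ‖x^k − x*‖²_B ≤ (1 − σ_∞²(B,S))^k ‖x⁰ − x*‖²_B. -/

import Mathlib

open Matrix BigOperators
open RealInnerProductSpace

/-- The four Penrose equations characterizing the Moore–Penrose pseudoinverse `P` of `M`. -/
def PenroseInv {k : ℕ} (M P : Matrix (Fin k) (Fin k) ℝ) : Prop :=
  M * P * M = M ∧ P * M * P = P ∧ (M * P)ᵀ = M * P ∧ (P * M)ᵀ = P * M

/-- The projection matrix `Z = B^{-1/2} Aᵀ S (Sᵀ A B⁻¹ Aᵀ S)† Sᵀ A B^{-1/2}`, where `Bh`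
plays the role of `B^{1/2}` and `P` that of the pseudoinverse `(Sᵀ A B⁻¹ Aᵀ S)†`. -/
noncomputable def Zmat {m n τ : ℕ} (A : Matrix (Fin m) (Fin n) ℝ) (B Bh : Matrix (Fin n) (Fin n) ℝ)
    (S : Matrix (Fin m) (Fin τ) ℝ) (P : Matrix (Fin τ) (Fin τ) ℝ) :
    Matrix (Fin n) (Fin n) ℝ :=
  Bh⁻¹ * Aᵀ * (S * P * Sᵀ) * A * Bh⁻¹

/-- Sketched loss expressed via the projection `Z`:  `f(x) = ‖B^{1/2}(x - x*)‖²_Z`. -/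
noncomputable def zloss {m n τ : ℕ} (A : Matrix (Fin m) (Fin n) ℝ)
    (B Bh : Matrix (Fin n) (Fin n) ℝ) (S : Matrix (Fin m) (Fin τ) ℝ)
    (P : Matrix (Fin τ) (Fin τ) ℝ) (xs x : Fin n → ℝ) : ℝ :=
  Bh.mulVec (x - xs) ⬝ᵥ (Zmat A B Bh S P).mulVec (Bh.mulVec (x - xs))

/-- The spectral constant `σ_p²(B,S)`. -/
noncomputable def sigmaP {m n τ q : ℕ} (A : Matrix (Fin m) (Fin n) ℝ)
    (B Bh : Matrix (Fin n) (Fin n) ℝ) (S : Fin q → Matrix (Fin m) (Fin τ) ℝ)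
    (P : Fin q → Matrix (Fin τ) (Fin τ) ℝ) (p : Fin q → ℝ) : ℝ :=
  sInf {r : ℝ | ∃ v, v ≠ 0 ∧ v ∈ Set.range (B⁻¹ * Aᵀ).mulVec ∧
    r = Bh.mulVec v ⬝ᵥ (∑ i, p i • Zmat A B Bh (S i) (P i)).mulVec (Bh.mulVec v) /
      (v ⬝ᵥ B.mulVec v)}

/-- The spectral constant `σ_∞²(B,S)`. -/
noncomputable def sigmaInf {m n τ q : ℕ} (A : Matrix (Fin m) (Fin n) ℝ)
    (B Bh : Matrix (Fin n) (Fin n) ℝ) (S : Fin q → Matrix (Fin m) (Fin τ) ℝ)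
    (P : Fin q → Matrix (Fin τ) (Fin τ) ℝ) : ℝ :=
  sInf {r : ℝ | ∃ v, v ≠ 0 ∧ v ∈ Set.range (B⁻¹ * Aᵀ).mulVec ∧
    r = ⨆ i, Bh.mulVec v ⬝ᵥ (Zmat A B Bh (S i) (P i)).mulVec (Bh.mulVec v) /
      (v ⬝ᵥ B.mulVec v)}

/-- The sketched loss `f_i(x) = ‖A x − b‖²_{H_i}`. -/
noncomputable def sketchLoss {m n τ : ℕ} (A : Matrix (Fin m) (Fin n) ℝ) (b : Fin m → ℝ)
    (S : Matrix (Fin m) (Fin τ) ℝ) (P : Matrix (Fin τ) (Fin τ) ℝ) (x : Fin n → ℝ) : ℝ :=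
  (A.mulVec x - b) ⬝ᵥ (S * P * Sᵀ).mulVec (A.mulVec x - b)

lemma penrose_unique {k : ℕ} {M P1 P2 : Matrix (Fin k) (Fin k) ℝ}
    (h1 : PenroseInv M P1) (h2 : PenroseInv M P2) : P1 = P2 := by
  obtain ⟨a1, b1, c1, d1⟩ := h1
  obtain ⟨a2, b2, c2, d2⟩ := h2
  have hMP : M * P1 = M * P2 := by
    calc M * P1 = (M * P2 * M) * P1 := by rw [a2]
    _ = (M * P2) * (M * P1) := by rw [Matrix.mul_assoc]
    _ = (M * P2)ᵀ * (M * P1)ᵀ := by rw [c1, c2]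
    _ = ((M * P1) * (M * P2))ᵀ := by simp only [Matrix.transpose_mul, Matrix.mul_assoc]
    _ = (M * P1 * M * P2)ᵀ := by simp only [Matrix.mul_assoc]
    _ = (M * P2)ᵀ := by rw [a1]
    _ = M * P2 := c2
  have hPM : P1 * M = P2 * M := by
    calc P1 * M = P1 * (M * P2 * M) := by rw [a2]
    _ = (P1 * M) * (P2 * M) := by simp only [Matrix.mul_assoc]
    _ = (P1 * M)ᵀ * (P2 * M)ᵀ := by rw [d1, d2]
    _ = ((P2 * M) * (P1 * M))ᵀ := by simp only [Matrix.transpose_mul, Matrix.mul_assoc]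
    _ = (P2 * (M * P1 * M))ᵀ := by simp only [Matrix.mul_assoc]
    _ = (P2 * M)ᵀ := by rw [a1]
    _ = P2 * M := d2
  calc P1 = P1 * M * P1 := b1.symm
  _ = P2 * M * P1 := by rw [hPM]
  _ = P2 * (M * P1) := by rw [Matrix.mul_assoc]
  _ = P2 * (M * P2) := by rw [hMP]
  _ = P2 * M * P2 := by rw [Matrix.mul_assoc]
  _ = P2 := b2

lemma penrose_symm {k : ℕ} {M P : Matrix (Fin k) (Fin k) ℝ}
    (hM : Mᵀ = M) (h : PenroseInv M P) : Pᵀ = P := by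
  obtain ⟨a, b, c, d⟩ := h
  have e3 : M * Pᵀ = P * M := by
    calc M * Pᵀ = Mᵀ * Pᵀ := by rw [hM]
    _ = (P * M)ᵀ := (Matrix.transpose_mul ..).symm
    _ = P * M := d
  have e4 : Pᵀ * M = M * P := by
    calc Pᵀ * M = Pᵀ * Mᵀ := by rw [hM]
    _ = (M * P)ᵀ := (Matrix.transpose_mul ..).symm
    _ = M * P := c
  have ht : PenroseInv M Pᵀ := by
    refine ⟨?_, ?_, ?_, ?_⟩
    · have h1 : (M * P * M)ᵀ = Mᵀ := by rw [a]
      simp only [Matrix.transpose_mul] at h1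
      rw [hM] at h1
      calc M * Pᵀ * M = M * (Pᵀ * M) := by rw [Matrix.mul_assoc]
      _ = M := h1
    · have h1 : (P * M * P)ᵀ = Pᵀ := by rw [b]
      simp only [Matrix.transpose_mul] at h1
      rw [hM] at h1
      calc Pᵀ * M * Pᵀ = Pᵀ * (M * Pᵀ) := by rw [Matrix.mul_assoc]
      _ = Pᵀ := h1
    · rw [e3, d]
    · rw [e4, c]
  exact penrose_unique ht ⟨a, b, c, d⟩

lemma mulVec_dot_mulVec {a c d : ℕ} (M : Matrix (Fin a) (Fin c) ℝ)
    (N : Matrix (Fin a) (Fin d) ℝ) (v : Fin c → ℝ) (w : Fin d → ℝ) :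
    M.mulVec v ⬝ᵥ N.mulVec w = v ⬝ᵥ (Mᵀ * N).mulVec w := by
  rw [← Matrix.mulVec_mulVec, Matrix.dotProduct_mulVec v, Matrix.vecMul_transpose]

lemma mem_range_transpose {m n : ℕ} (A : Matrix (Fin m) (Fin n) ℝ) (u : Fin n → ℝ)
    (h : ∀ z : Fin n → ℝ, A.mulVec z = 0 → u ⬝ᵥ z = 0) :
    ∃ w, Aᵀ.mulVec w = u := by
  let L : EuclideanSpace ℝ (Fin m) →ₗ[ℝ] EuclideanSpace ℝ (Fin n) :=
    { toFun := fun w => WithLp.toLp 2 (Aᵀ.mulVec w)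
      map_add' := fun a b => by simp [Matrix.mulVec_add]
      map_smul' := fun c a => by simp [Matrix.mulVec_smul] }
  have hinner : ∀ (a b : EuclideanSpace ℝ (Fin n)),
      ⟪a, b⟫ = dotProduct (WithLp.equiv 2 (Fin n → ℝ) a) (WithLp.equiv 2 (Fin n → ℝ) b) := by
    intro a b
    simpa [dotProduct_comm] using EuclideanSpace.inner_eq_star_dotProduct a b
  let u' : EuclideanSpace ℝ (Fin n) := (WithLp.equiv 2 (Fin n → ℝ)).symm u
  have hu : u' ∈ (LinearMap.range L)ᗮᗮ := by
    rw [Submodule.mem_orthogonal]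
    intro z hz
    rw [Submodule.mem_orthogonal] at hz
    have hz2 := hz (L (WithLp.toLp 2 (A.mulVec z))) (LinearMap.mem_range_self _ _)
    rw [hinner] at hz2
    have hzz : A.mulVec z ⬝ᵥ A.mulVec z = 0 := by
      have heq : (Aᵀ.mulVec (A.mulVec z)) ⬝ᵥ z = A.mulVec z ⬝ᵥ A.mulVec z := by
        rw [dotProduct_comm, Matrix.dotProduct_mulVec, Matrix.vecMul_transpose]
      rw [← heq]
      exact hz2
    have hAz : A.mulVec z = 0 := dotProduct_self_eq_zero.mp hzz
    rw [hinner, dotProduct_comm]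
    exact h z hAz
  rw [Submodule.orthogonal_orthogonal] at hu
  obtain ⟨w, hw⟩ := hu
  exact ⟨WithLp.ofLp w, congrArg (WithLp.equiv 2 (Fin n → ℝ)) hw⟩


/-- Max-distance sketch-and-project converges linearly:
`‖x^k − x*‖²_B ≤ (1 − σ_∞²(B,S))^k ‖x⁰ − x*‖²_B`. -/
theorem maxdist_linear_convergence {m n τ q : ℕ} (hq : 0 < q)
    (A : Matrix (Fin m) (Fin n) ℝ) (b : Fin m → ℝ)
    (B Bh : Matrix (Fin n) (Fin n) ℝ)
    (hB : B.PosDef) (hBh : Bh.PosDef) (hBhB : Bh * Bh = B)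
    (S : Fin q → Matrix (Fin m) (Fin τ) ℝ) (P : Fin q → Matrix (Fin τ) (Fin τ) ℝ)
    (hP : ∀ i, PenroseInv ((S i)ᵀ * A * B⁻¹ * Aᵀ * S i) (P i))
    (xs : Fin n → ℝ) (hxs : A.mulVec xs = b)
    (hmin : ∀ y, A.mulVec y = b → xs ⬝ᵥ B.mulVec xs ≤ y ⬝ᵥ B.mulVec y)
    (x : ℕ → Fin n → ℝ) (ik : ℕ → Fin q)
    (hx0 : x 0 ∈ Set.range (B⁻¹ * Aᵀ).mulVec)
    (hsel : ∀ k j, sketchLoss A b (S j) (P j) (x k)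
      ≤ sketchLoss A b (S (ik k)) (P (ik k)) (x k))
    (hupd : ∀ k, x (k + 1)
      = x k - (B⁻¹ * Aᵀ * (S (ik k) * P (ik k) * (S (ik k))ᵀ)).mulVec
          (A.mulVec (x k) - b)) :
    ∀ k, (x k - xs) ⬝ᵥ B.mulVec (x k - xs)
      ≤ (1 - sigmaInf A B Bh S P) ^ k * ((x 0 - xs) ⬝ᵥ B.mulVec (x 0 - xs)) := by
  haveI : Nonempty (Fin q) := ⟨⟨0, hq⟩⟩
  have hBs : Bᵀ = B := hB.isHermitian.eq
  have hBhs : Bhᵀ = Bh := hBh.isHermitian.eq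
  have hBd : IsUnit B.det := hB.det_pos.ne'.isUnit
  have hBhd : IsUnit Bh.det := hBh.det_pos.ne'.isUnit
  have hBh_li : Bh⁻¹ * Bh = 1 := Matrix.nonsing_inv_mul _ hBhd
  have hBh_ri : Bh * Bh⁻¹ = 1 := Matrix.mul_nonsing_inv _ hBhd
  have hB_li : B⁻¹ * B = 1 := Matrix.nonsing_inv_mul _ hBd
  have hBinv2 : B⁻¹ = Bh⁻¹ * Bh⁻¹ := by rw [← hBhB, Matrix.mul_inv_rev]
  have hBhinvs : (Bh⁻¹)ᵀ = Bh⁻¹ := by rw [Matrix.transpose_nonsing_inv, hBhs]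
  have hBinvs : (B⁻¹)ᵀ = B⁻¹ := by rw [Matrix.transpose_nonsing_inv, hBs]
  have dot_self_nonneg : ∀ {p : ℕ} (v : Fin p → ℝ), 0 ≤ v ⬝ᵥ v :=
    fun v => Finset.sum_nonneg fun i _ => mul_self_nonneg _
  have hBpos : ∀ w : Fin n → ℝ, w ≠ 0 → 0 < w ⬝ᵥ B.mulVec w := fun w hw => hB.dotProduct_mulVec_pos hw
  have hBnn : ∀ w : Fin n → ℝ, 0 ≤ w ⬝ᵥ B.mulVec w := fun w => hB.posSemidef.dotProduct_mulVec_nonneg w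
  have hPs : ∀ i, (P i)ᵀ = P i := by
    intro i
    refine penrose_symm ?_ (hP i)
    simp [Matrix.transpose_mul, Matrix.mul_assoc, hBinvs]
  have cancel1 : ∀ (p : ℕ) (X : Matrix (Fin n) (Fin p) ℝ), Bh * (Bh⁻¹ * X) = X := by
    intro p X; rw [← Matrix.mul_assoc, hBh_ri, Matrix.one_mul]
  have cancel3 : ∀ (p : ℕ) (X : Matrix (Fin n) (Fin p) ℝ), Bh⁻¹ * (Bh⁻¹ * X) = B⁻¹ * X := by
    intro p X; rw [← Matrix.mul_assoc, ← hBinv2]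
  have hPMP : ∀ i (p : ℕ) (Y : Matrix (Fin τ) (Fin p) ℝ),
      P i * ((S i)ᵀ * (A * (B⁻¹ * (Aᵀ * (S i * (P i * Y)))))) = P i * Y := by
    intro i p Y
    have h1 : (P i * ((S i)ᵀ * A * B⁻¹ * Aᵀ * S i) * P i) * Y = P i * Y := by rw [(hP i).2.1]
    simpa only [Matrix.mul_assoc] using h1
  have hZsym : ∀ i, (Zmat A B Bh (S i) (P i))ᵀ = Zmat A B Bh (S i) (P i) := by
    intro i
    simp [Zmat, Matrix.transpose_mul, Matrix.transpose_transpose, hBhinvs, hPs, Matrix.mul_assoc]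
  have hZidem : ∀ i, Zmat A B Bh (S i) (P i) * Zmat A B Bh (S i) (P i)
      = Zmat A B Bh (S i) (P i) := by
    intro i
    simp only [Zmat, Matrix.mul_assoc, cancel3, hPMP]
  have hZZ : ∀ i (w : Fin n → ℝ),
      ((Zmat A B Bh (S i) (P i)).mulVec w) ⬝ᵥ ((Zmat A B Bh (S i) (P i)).mulVec w)
        = w ⬝ᵥ (Zmat A B Bh (S i) (P i)).mulVec w := by
    intro i w
    rw [mulVec_dot_mulVec, hZsym i, hZidem i]
  have hZnn : ∀ i (w : Fin n → ℝ), 0 ≤ w ⬝ᵥ (Zmat A B Bh (S i) (P i)).mulVec w := by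
    intro i w
    rw [← hZZ i w]; exact dot_self_nonneg _
  have hZle : ∀ i (w : Fin n → ℝ), w ⬝ᵥ (Zmat A B Bh (S i) (P i)).mulVec w ≤ w ⬝ᵥ w := by
    intro i w
    have hexp : (w - (Zmat A B Bh (S i) (P i)).mulVec w) ⬝ᵥ (w - (Zmat A B Bh (S i) (P i)).mulVec w)
        = w ⬝ᵥ w - w ⬝ᵥ (Zmat A B Bh (S i) (P i)).mulVec w := by
      rw [sub_dotProduct, dotProduct_sub, dotProduct_sub, hZZ i w,
        dotProduct_comm ((Zmat A B Bh (S i) (P i)).mulVec w) w]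
      ring
    have h0 := dot_self_nonneg (w - (Zmat A B Bh (S i) (P i)).mulVec w)
    linarith [hexp ▸ h0]
  have hD : ∀ v : Fin n → ℝ, v ⬝ᵥ B.mulVec v = (Bh.mulVec v) ⬝ᵥ (Bh.mulVec v) := by
    intro v
    rw [mulVec_dot_mulVec, hBhs, hBhB]
  have hM1 : ∀ i, Bh * (Zmat A B Bh (S i) (P i) * Bh)
      = Aᵀ * ((S i * P i * (S i)ᵀ) * A) := by
    intro i
    simp only [Zmat, Matrix.mul_assoc, hBh_li, Matrix.mul_one, cancel1]
  have hq1 : ∀ i (v : Fin n → ℝ),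
      Bh.mulVec v ⬝ᵥ (Zmat A B Bh (S i) (P i)).mulVec (Bh.mulVec v)
        = A.mulVec v ⬝ᵥ (S i * P i * (S i)ᵀ).mulVec (A.mulVec v) := by
    intro i v
    rw [Matrix.mulVec_mulVec, Matrix.mulVec_mulVec, mulVec_dot_mulVec, mulVec_dot_mulVec,
      hBhs, hM1 i]
  have hres : ∀ k, A.mulVec (x k) - b = A.mulVec (x k - xs) := by
    intro k; rw [Matrix.mulVec_sub, hxs]
  -- xs is in the range of B⁻¹Aᵀ
  have hperp : ∀ z : Fin n → ℝ, A.mulVec z = 0 → (B.mulVec xs) ⬝ᵥ z = 0 := by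
    intro z hz
    set c := (B.mulVec xs) ⬝ᵥ z with hc
    set d := z ⬝ᵥ B.mulVec z with hdd
    have hd : 0 ≤ d := hB.posSemidef.dotProduct_mulVec_nonneg z
    have key : ∀ t : ℝ, 0 ≤ 2 * t * c + t ^ 2 * d := by
      intro t
      have hfeas : A.mulVec (xs + t • z) = b := by
        rw [Matrix.mulVec_add, Matrix.mulVec_smul, hz, hxs]; simp
      have h2 := hmin _ hfeas
      have e1 : xs ⬝ᵥ B.mulVec z = c := by
        rw [Matrix.dotProduct_mulVec, ← Matrix.mulVec_transpose, hBs, hc]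
      have e2 : z ⬝ᵥ B.mulVec xs = c := by
        rw [dotProduct_comm, hc]
      have hexp : (xs + t • z) ⬝ᵥ B.mulVec (xs + t • z)
          = xs ⬝ᵥ B.mulVec xs + (2 * t * c + t ^ 2 * d) := by
        rw [Matrix.mulVec_add, Matrix.mulVec_smul, add_dotProduct, smul_dotProduct,
          dotProduct_add, dotProduct_add, dotProduct_smul,
          dotProduct_smul, e1, e2, ← hdd]
        simp only [smul_eq_mul]
        ring
      linarith [h2, hexp]
    rcases eq_or_lt_of_le hd with hd0 | hd0
    · have h := key (-c)
      rw [← hd0] at h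
      have hcc : c * c = 0 := le_antisymm (by nlinarith) (mul_self_nonneg c)
      exact mul_self_eq_zero.mp hcc
    · set a := c / d with ha'
      have ha : a * d = c := div_mul_cancel₀ c hd0.ne'
      have h := key (-a)
      have haa : a * a * d = a * c := by rw [← ha]; ring
      have h2 : a * c ≤ 0 := by nlinarith [h, haa]
      have h3 : 0 ≤ a * c := by nlinarith [haa, mul_nonneg (mul_self_nonneg a) hd0.le]
      have hac : a * c = 0 := le_antisymm h2 h3
      have hcc : c * c = 0 := by
        calc c * c = (a * c) * d := by rw [← ha]; ring
        _ = 0 := by rw [hac]; ring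
      exact mul_self_eq_zero.mp hcc
  have hxs_mem : ∃ w, (B⁻¹ * Aᵀ).mulVec w = xs := by
    obtain ⟨w, hw⟩ := mem_range_transpose A (B.mulVec xs) hperp
    refine ⟨w, ?_⟩
    rw [← Matrix.mulVec_mulVec, hw, Matrix.mulVec_mulVec, hB_li, Matrix.one_mulVec]
  have he_mem : ∀ k, ∃ u, (B⁻¹ * Aᵀ).mulVec u = x k - xs := by
    intro k
    induction k with
    | zero =>
      obtain ⟨u0, hu0⟩ := hx0
      obtain ⟨w, hw⟩ := hxs_mem
      exact ⟨u0 - w, by rw [Matrix.mulVec_sub, hu0, hw]⟩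
    | succ k ih =>
      obtain ⟨u, hu⟩ := ih
      refine ⟨u - (S (ik k) * P (ik k) * (S (ik k))ᵀ).mulVec (A.mulVec (x k - xs)), ?_⟩
      have hxx : x (k + 1) - xs = (x k - xs)
          - (B⁻¹ * Aᵀ).mulVec ((S (ik k) * P (ik k) * (S (ik k))ᵀ).mulVec (A.mulVec (x k - xs))) := by
        rw [hupd k, hres k, sub_right_comm]
        simp only [Matrix.mulVec_mulVec, Matrix.mul_assoc]
      rw [Matrix.mulVec_sub, hu, hxx]
  -- one-step energy identity
  have hstep : ∀ k, (x (k + 1) - xs) ⬝ᵥ B.mulVec (x (k + 1) - xs)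
      = (Bh.mulVec (x k - xs)) ⬝ᵥ (Bh.mulVec (x k - xs))
        - (Bh.mulVec (x k - xs)) ⬝ᵥ (Zmat A B Bh (S (ik k)) (P (ik k))).mulVec (Bh.mulVec (x k - xs)) := by
    intro k
    have hM2 : Bh * (B⁻¹ * Aᵀ * (S (ik k) * P (ik k) * (S (ik k))ᵀ)) * A
        = Zmat A B Bh (S (ik k)) (P (ik k)) * Bh := by
      simp only [Zmat, hBinv2, Matrix.mul_assoc, cancel1, hBh_li, Matrix.mul_one]
    have hxx : x (k + 1) - xs = (x k - xs)
        - (B⁻¹ * Aᵀ * (S (ik k) * P (ik k) * (S (ik k))ᵀ)).mulVec (A.mulVec (x k - xs)) := by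
      rw [hupd k, hres k, sub_right_comm]
    have hr1 : Bh.mulVec (x (k + 1) - xs)
        = Bh.mulVec (x k - xs)
          - (Zmat A B Bh (S (ik k)) (P (ik k))).mulVec (Bh.mulVec (x k - xs)) := by
      rw [hxx, Matrix.mulVec_sub]
      congr 1
      rw [Matrix.mulVec_mulVec, Matrix.mulVec_mulVec, Matrix.mulVec_mulVec, hM2]
    rw [hD, hr1]
    have h1 := hZZ (ik k) (Bh.mulVec (x k - xs))
    have h2 := dotProduct_comm
      ((Zmat A B Bh (S (ik k)) (P (ik k))).mulVec (Bh.mulVec (x k - xs))) (Bh.mulVec (x k - xs))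
    rw [sub_dotProduct, dotProduct_sub, dotProduct_sub, h1, h2]
    ring
  have hselZ : ∀ k j,
      (Bh.mulVec (x k - xs)) ⬝ᵥ (Zmat A B Bh (S j) (P j)).mulVec (Bh.mulVec (x k - xs))
        ≤ (Bh.mulVec (x k - xs)) ⬝ᵥ (Zmat A B Bh (S (ik k)) (P (ik k))).mulVec (Bh.mulVec (x k - xs)) := by
    intro k j
    rw [hq1 j, hq1 (ik k)]
    have h := hsel k j
    simp only [sketchLoss, hres k] at h
    exact h
  -- the defining set of sigmaInf
  set T : Set ℝ := {r : ℝ | ∃ v, v ≠ 0 ∧ v ∈ Set.range (B⁻¹ * Aᵀ).mulVec ∧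
    r = ⨆ i, Bh.mulVec v ⬝ᵥ (Zmat A B Bh (S i) (P i)).mulVec (Bh.mulVec v) /
      (v ⬝ᵥ B.mulVec v)} with hT
  have hsig : sigmaInf A B Bh S P = sInf T := rfl
  have hbdd : BddBelow T := by
    refine ⟨0, ?_⟩
    rintro r ⟨v, hv0, hvr, rfl⟩
    exact Real.iSup_nonneg fun i => div_nonneg (hZnn i _) (hBnn v)
  have hub : ∀ r ∈ T, r ≤ 1 := by
    rintro r ⟨v, hv0, hvr, rfl⟩
    refine ciSup_le fun j => ?_
    rw [div_le_one (hBpos v hv0)]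
    calc Bh.mulVec v ⬝ᵥ (Zmat A B Bh (S j) (P j)).mulVec (Bh.mulVec v)
        ≤ (Bh.mulVec v) ⬝ᵥ (Bh.mulVec v) := hZle j _
    _ = v ⬝ᵥ B.mulVec v := (hD v).symm
  have hs1 : sigmaInf A B Bh S P ≤ 1 := by
    rw [hsig]
    by_cases hne : T.Nonempty
    · obtain ⟨r, hr⟩ := hne
      exact le_trans (csInf_le hbdd hr) (hub r hr)
    · rw [Set.not_nonempty_iff_eq_empty] at hne
      rw [hne, Real.sInf_empty]; norm_num
  have hkey : ∀ k, (x (k + 1) - xs) ⬝ᵥ B.mulVec (x (k + 1) - xs)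
      ≤ (1 - sigmaInf A B Bh S P) * ((x k - xs) ⬝ᵥ B.mulVec (x k - xs)) := by
    intro k
    rw [hstep k]
    by_cases h0 : x k - xs = 0
    · rw [h0]
      simp [Matrix.mulVec_zero]
    · have hDpos : 0 < (x k - xs) ⬝ᵥ B.mulVec (x k - xs) := hBpos _ h0
      have hDr := hD (x k - xs)
      have hmem : (⨆ i, Bh.mulVec (x k - xs) ⬝ᵥ (Zmat A B Bh (S i) (P i)).mulVec (Bh.mulVec (x k - xs)) /
          ((x k - xs) ⬝ᵥ B.mulVec (x k - xs))) ∈ T := ⟨x k - xs, h0, he_mem k |>.imp (fun u hu => hu) |>.elim (fun u hu => ⟨u, hu⟩), rfl⟩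
      have h1 : sigmaInf A B Bh S P ≤ ⨆ i, Bh.mulVec (x k - xs) ⬝ᵥ (Zmat A B Bh (S i) (P i)).mulVec (Bh.mulVec (x k - xs)) /
          ((x k - xs) ⬝ᵥ B.mulVec (x k - xs)) := by
        rw [hsig]; exact csInf_le hbdd hmem
      have h2 : (⨆ i, Bh.mulVec (x k - xs) ⬝ᵥ (Zmat A B Bh (S i) (P i)).mulVec (Bh.mulVec (x k - xs)) /
          ((x k - xs) ⬝ᵥ B.mulVec (x k - xs)))
          ≤ Bh.mulVec (x k - xs) ⬝ᵥ (Zmat A B Bh (S (ik k)) (P (ik k))).mulVec (Bh.mulVec (x k - xs)) /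
          ((x k - xs) ⬝ᵥ B.mulVec (x k - xs)) :=
        ciSup_le fun j => (div_le_div_iff_of_pos_right hDpos).mpr (hselZ k j)
      have h3 : sigmaInf A B Bh S P * ((x k - xs) ⬝ᵥ B.mulVec (x k - xs))
          ≤ Bh.mulVec (x k - xs) ⬝ᵥ (Zmat A B Bh (S (ik k)) (P (ik k))).mulVec (Bh.mulVec (x k - xs)) :=
        (le_div_iff₀ hDpos).mp (le_trans h1 h2)
      linarith [hDr, h3]
  intro k
  induction k with
  | zero => simp
  | succ k ih =>
    calc (x (k + 1) - xs) ⬝ᵥ B.mulVec (x (k + 1) - xs)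
        ≤ (1 - sigmaInf A B Bh S P) * ((x k - xs) ⬝ᵥ B.mulVec (x k - xs)) := hkey k
    _ ≤ (1 - sigmaInf A B Bh S P) * ((1 - sigmaInf A B Bh S P) ^ k * ((x 0 - xs) ⬝ᵥ B.mulVec (x 0 - xs))) :=
        mul_le_mul_of_nonneg_left ih (by linarith [hs1])
    _ = (1 - sigmaInf A B Bh S P) ^ (k + 1) * ((x 0 - xs) ⬝ᵥ B.mulVec (x 0 - xs)) := by ring
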